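/- For every δ ∈ (0,1) there exists a constant C = C(δ) > 0 such that for every integer n ≥ 1, (1/A_n^δ) · ∫_{Γ₃} | Σ_{k=0}^{n} A_{n−k}^{δ−1} · D*_k(u1,u2) | du1 du2 ≤ C · log(n+1), where Γ₃ = {(u1,u2) ∈ Γ : u1 ≥ 1/(n+1), u2 ≥ 1/(3(n+1))}. -/

import Mathlib

open MeasureTheory Finset

/-- The triangle `Γ = {(u₁,u₂) : 0 ≤ u₂ ≤ u₁/3, 0 ≤ u₁ ≤ 1}`. -/
def GammaT : Set (ℝ × ℝ) := {u | 0 ≤ u.2 ∧ u.2 ≤ u.1 / 3 ∧ 0 ≤ u.1 ∧ u.1 ≤ 1}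

open Finset in
/-- Cesàro numbers: `A_n^δ = (δ+1)(δ+2)⋯(δ+n)/n!`, with `A_0^δ = 1`. -/
noncomputable def cesaroA (δ : ℝ) (n : ℕ) : ℝ :=
  (∏ i ∈ Finset.range n, (δ + i + 1)) / n.factorial

/-- The transformed hexagonal Dirichlet kernel `D*_k`. -/
noncomputable def DstarK (k : ℕ) (u : ℝ × ℝ) : ℝ :=
  (Real.sin (((k : ℝ) + 1) * Real.pi * u.2) *
      Real.sin (((k : ℝ) + 1) * Real.pi * (u.1 + u.2) / 2) *
      Real.sin (((k : ℝ) + 1) * Real.pi * (u.1 - u.2) / 2) -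
    Real.sin ((k : ℝ) * Real.pi * u.2) *
      Real.sin ((k : ℝ) * Real.pi * (u.1 + u.2) / 2) *
      Real.sin ((k : ℝ) * Real.pi * (u.1 - u.2) / 2)) /
    (Real.sin (Real.pi * u.2) * Real.sin (Real.pi * (u.1 + u.2) / 2) *
      Real.sin (Real.pi * (u.1 - u.2) / 2))

lemma cesaroA_zero (δ : ℝ) : cesaroA δ 0 = 1 := by simp [cesaroA]

lemma cesaroA_pos {δ : ℝ} (hδ : -1 < δ) (n : ℕ) : 0 < cesaroA δ n := by
  apply div_pos
  · apply Finset.prod_pos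
    intro i _
    have : (0:ℝ) ≤ i := Nat.cast_nonneg i
    linarith
  · exact_mod_cast Nat.factorial_pos n

lemma cesaroA_succ (δ : ℝ) (n : ℕ) :
    cesaroA δ (n+1) = cesaroA δ n * ((δ + n + 1) / (n+1)) := by
  have h1 : ((n+1 : ℕ).factorial : ℝ) = (n+1) * n.factorial := by
    rw [Nat.factorial_succ]; push_cast; ring
  unfold cesaroA
  rw [Finset.prod_range_succ, h1, div_mul_div_comm, mul_comm ((n:ℝ)+1)]

lemma cesaroA_antitone {δ : ℝ} (hδ1 : δ ≤ 1) (hδ0 : -1 < δ - 1) (n : ℕ) :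
    cesaroA (δ-1) (n+1) ≤ cesaroA (δ-1) n := by
  rw [cesaroA_succ]
  have hpos := cesaroA_pos hδ0 n
  have hr : (δ - 1 + n + 1) / (n+1) ≤ 1 := by
    rw [div_le_one (by positivity)]
    linarith
  nlinarith [mul_le_mul_of_nonneg_left hr hpos.le]

lemma cesaroA_le_rpow {δ : ℝ} (hδ0 : 0 < δ) (hδ1 : δ ≤ 1) (m : ℕ) :
    cesaroA (δ-1) m ≤ ((m:ℝ)+1) ^ (δ-1) := by
  induction m with
  | zero => simp [cesaroA_zero]
  | succ m ih =>
    have hX : (0:ℝ) < (m:ℝ)+1 := by positivity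
    have hY : (0:ℝ) < (m:ℝ)+2 := by positivity
    have hm0 : (0:ℝ) ≤ (m:ℝ) := Nat.cast_nonneg m
    have hδm : (0:ℝ) ≤ δ + m := by linarith
    have hP : (0:ℝ) < ((m:ℝ)+1) ^ (1-δ) := Real.rpow_pos_of_pos hX _
    have hQ : (0:ℝ) < ((m:ℝ)+2) ^ (1-δ) := Real.rpow_pos_of_pos hY _
    have hb : (((m:ℝ)+2)/((m:ℝ)+1)) ^ (1-δ) ≤ 1 + (1-δ) * (1/((m:ℝ)+1)) := by
      have hmem : (-1:ℝ) ≤ 1/((m:ℝ)+1) := by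
        have : (0:ℝ) ≤ 1/((m:ℝ)+1) := by positivity
        linarith
      have := rpow_one_add_le_one_add_mul_self hmem
        (by linarith : (0:ℝ) ≤ 1-δ) (by linarith : 1-δ ≤ 1)
      have harg : 1 + 1/((m:ℝ)+1) = ((m:ℝ)+2)/((m:ℝ)+1) := by field_simp; ring
      rwa [harg] at this
    have hdiv : (((m:ℝ)+2)/((m:ℝ)+1)) ^ (1-δ)
        = ((m:ℝ)+2) ^ (1-δ) / ((m:ℝ)+1) ^ (1-δ) :=
      Real.div_rpow hY.le hX.le _
    have hexp : (1 + (1-δ)*(1/((m:ℝ)+1))) * (δ + m) ≤ (m:ℝ)+1 := by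
      rw [show (1 + (1-δ)*(1/((m:ℝ)+1))) = ((m:ℝ)+1+(1-δ))/((m:ℝ)+1) by field_simp,
        div_mul_eq_mul_div, div_le_iff₀ hX]
      nlinarith [sq_nonneg (1-δ)]
    have hkey : ((m:ℝ)+2) ^ (1-δ) * (δ + m) ≤ ((m:ℝ)+1) ^ (1-δ) * ((m:ℝ)+1) := by
      rw [hdiv, div_le_iff₀ hP] at hb
      nlinarith [mul_le_mul_of_nonneg_right hb hδm, mul_le_mul_of_nonneg_left hexp hP.le]
    rw [cesaroA_succ]
    push_cast
    have hrw1 : ((m:ℝ)+1) ^ (δ-1) = (((m:ℝ)+1) ^ (1-δ))⁻¹ := by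
      rw [← Real.rpow_neg hX.le]; norm_num
    have hrw2 : ((m:ℝ)+1+1) ^ (δ-1) = (((m:ℝ)+2) ^ (1-δ))⁻¹ := by
      rw [show ((m:ℝ)+1+1) = (m:ℝ)+2 by ring, ← Real.rpow_neg hY.le]; norm_num
    rw [hrw2]
    have hfac : (0:ℝ) ≤ (δ - 1 + ((m:ℝ) + 1)) / ((m:ℝ)+1) := by
      apply div_nonneg _ hX.le; linarith
    have step1 : cesaroA (δ-1) m * ((δ - 1 + ((m:ℝ)+1))/((m:ℝ)+1))
        ≤ (((m:ℝ)+1) ^ (1-δ))⁻¹ * ((δ - 1 + ((m:ℝ)+1))/((m:ℝ)+1)) := by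
      apply mul_le_mul_of_nonneg_right _ hfac
      rw [← hrw1]; exact ih
    have hgoal : cesaroA (δ - 1) m * ((δ - 1 + ((m:ℝ) + 1)) / ((m:ℝ) + 1))
        ≤ (((m:ℝ)+2) ^ (1-δ))⁻¹ := by
      refine le_trans step1 ?_
      rw [show δ - 1 + ((m:ℝ) + 1) = δ + m by ring, inv_mul_eq_div, inv_eq_one_div,
        div_le_div_iff₀ (by positivity) hQ, div_mul_eq_mul_div, div_le_iff₀ hX, one_mul]
      nlinarith [hkey]
    convert hgoal using 2 <;> ring

lemma rpow_le_cesaroA {δ : ℝ} (hδ0 : 0 ≤ δ) (hδ1 : δ ≤ 1) (n : ℕ) :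
    ((n:ℝ)+1) ^ δ ≤ cesaroA δ n := by
  induction n with
  | zero => simp [cesaroA_zero]
  | succ n ih =>
    have hX : (0:ℝ) < (n:ℝ)+1 := by positivity
    have hb : (((n:ℝ)+2)/((n:ℝ)+1)) ^ δ ≤ 1 + δ * (1/((n:ℝ)+1)) := by
      have hmem : (-1:ℝ) ≤ 1/((n:ℝ)+1) := by
        have : (0:ℝ) ≤ 1/((n:ℝ)+1) := by positivity
        linarith
      have := rpow_one_add_le_one_add_mul_self hmem hδ0 hδ1
      have harg : 1 + 1/((n:ℝ)+1) = ((n:ℝ)+2)/((n:ℝ)+1) := by field_simp; ring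
      rwa [harg] at this
    have hdiv : (((n:ℝ)+2)/((n:ℝ)+1)) ^ δ = ((n:ℝ)+2) ^ δ / ((n:ℝ)+1) ^ δ :=
      Real.div_rpow (by positivity) hX.le _
    have hPpos : (0:ℝ) < ((n:ℝ)+1) ^ δ := Real.rpow_pos_of_pos hX _
    rw [cesaroA_succ]
    push_cast
    rw [show ((n:ℝ)+1+1) = (n:ℝ)+2 by ring]
    have h1 : ((n:ℝ)+2) ^ δ ≤ ((n:ℝ)+1) ^ δ * ((δ + ((n:ℝ)+1))/((n:ℝ)+1)) := by
      rw [hdiv, div_le_iff₀ hPpos] at hb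
      calc ((n:ℝ)+2) ^ δ ≤ (1 + δ*(1/((n:ℝ)+1))) * ((n:ℝ)+1) ^ δ := hb
        _ = ((n:ℝ)+1) ^ δ * ((δ + ((n:ℝ)+1))/((n:ℝ)+1)) := by field_simp; ring
    have h2 : ((n:ℝ)+1) ^ δ * ((δ + ((n:ℝ)+1))/((n:ℝ)+1))
        ≤ cesaroA δ n * ((δ + ((n:ℝ)+1))/((n:ℝ)+1)) := by
      apply mul_le_mul_of_nonneg_right ih
      apply div_nonneg _ hX.le
      linarith [Nat.cast_nonneg (α := ℝ) n]
    calc ((n:ℝ)+2) ^ δ ≤ _ := h1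
      _ ≤ _ := h2
      _ = cesaroA δ n * ((δ + (n:ℝ) + 1)/((n:ℝ)+1)) := by ring_nf

lemma sum_rpow_le {δ : ℝ} (hδ0 : 0 < δ) (hδ1 : δ ≤ 1) (m : ℕ) :
    ∑ j ∈ Finset.range m, ((j:ℝ)+1) ^ (δ-1) ≤ (m:ℝ) ^ δ / δ := by
  induction m with
  | zero => simp [Real.zero_rpow hδ0.ne']
  | succ m ih =>
    rw [Finset.sum_range_succ]
    have hX : (0:ℝ) < (m:ℝ)+1 := by positivity
    have hm0 : (0:ℝ) ≤ (m:ℝ) := Nat.cast_nonneg m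
    have hs : (-1:ℝ) ≤ -(1/((m:ℝ)+1)) := by
      have : 1/((m:ℝ)+1) ≤ 1 := by rw [div_le_one hX]; linarith
      linarith
    have h := rpow_one_add_le_one_add_mul_self hs hδ0.le hδ1
    rw [show (1:ℝ) + -(1/((m:ℝ)+1)) = (m:ℝ)/((m:ℝ)+1) by field_simp; ring] at h
    have hsplit : ((m:ℝ)) ^ δ = ((m:ℝ)/((m:ℝ)+1)) ^ δ * ((m:ℝ)+1) ^ δ := by
      rw [← Real.mul_rpow (by positivity) hX.le, div_mul_cancel₀ _ hX.ne']
    have hpow1 : ((m:ℝ)+1) ^ (δ-1) = ((m:ℝ)+1) ^ δ / ((m:ℝ)+1) := by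
      rw [Real.rpow_sub hX, Real.rpow_one]
    have hPpos : (0:ℝ) < ((m:ℝ)+1) ^ δ := Real.rpow_pos_of_pos hX _
    have hkey : (m:ℝ) ^ δ + δ * (((m:ℝ)+1) ^ (δ-1)) ≤ ((m:ℝ)+1) ^ δ := by
      rw [hsplit, hpow1]
      have h2 : ((m:ℝ)/((m:ℝ)+1)) ^ δ * ((m:ℝ)+1) ^ δ
          ≤ (1 + δ * -(1/((m:ℝ)+1))) * ((m:ℝ)+1) ^ δ :=
        mul_le_mul_of_nonneg_right h hPpos.le
      have h3 : (1 + δ * -(1/((m:ℝ)+1))) * ((m:ℝ)+1) ^ δ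
          = ((m:ℝ)+1) ^ δ - δ * (((m:ℝ)+1) ^ δ / ((m:ℝ)+1)) := by
        field_simp; ring
      linarith
    push_cast
    have h4 : ((m:ℝ)^δ + δ*(((m:ℝ)+1)^(δ-1)))/δ ≤ (((m:ℝ)+1)^δ)/δ := by gcongr
    have h5 : ((m:ℝ)^δ + δ*(((m:ℝ)+1)^(δ-1)))/δ = (m:ℝ)^δ/δ + ((m:ℝ)+1)^(δ-1) := by
      field_simp
    linarith [ih]

lemma sin_lower {t : ℝ} (h0 : 0 ≤ t) (h1 : t ≤ 2*Real.pi/3) : t/3 ≤ Real.sin t := by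
  have hπ := Real.pi_gt_three
  have hπ2 : Real.pi < 3.15 := Real.pi_lt_d2
  have hc : (0:ℝ) < 2*Real.pi/3 := by linarith
  have hmem0 : (0:ℝ) ∈ Set.Icc 0 Real.pi := by constructor <;> linarith
  have hmemc : 2*Real.pi/3 ∈ Set.Icc 0 Real.pi := by constructor <;> linarith
  have hb0 : 0 ≤ t/(2*Real.pi/3) := by positivity
  have ha0 : 0 ≤ 1 - t/(2*Real.pi/3) := by
    have : t/(2*Real.pi/3) ≤ 1 := by rw [div_le_one hc]; linarith
    linarith
  have hab : (1 - t/(2*Real.pi/3)) + t/(2*Real.pi/3) = 1 := by ring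
  have hcc := strictConcaveOn_sin_Icc.concaveOn.2 hmem0 hmemc ha0 hb0 hab
  simp only [smul_eq_mul, mul_zero, Real.sin_zero, zero_add] at hcc
  have harg : t/(2*Real.pi/3) * (2*Real.pi/3) = t := by field_simp
  rw [harg] at hcc
  have hsinc : Real.sin (2*Real.pi/3) = Real.sqrt 3 / 2 := by
    rw [show 2*Real.pi/3 = Real.pi - Real.pi/3 by ring, Real.sin_pi_sub,
      Real.sin_pi_div_three]
  rw [hsinc] at hcc
  have hsqrt3 : (1.7:ℝ) ≤ Real.sqrt 3 := by
    rw [show (1.7:ℝ) = Real.sqrt (1.7^2) from (Real.sqrt_sq (by norm_num)).symm]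
    apply Real.sqrt_le_sqrt; norm_num
  have h4 : (4:ℝ)*Real.pi ≤ 9*Real.sqrt 3 := by nlinarith
  have heq : t/(2*Real.pi/3) * (Real.sqrt 3/2) = 3*t*Real.sqrt 3/(4*Real.pi) := by
    field_simp
    ring
  have hfin : t/3 ≤ t/(2*Real.pi/3) * (Real.sqrt 3/2) := by
    rw [heq, div_le_div_iff₀ (by norm_num : (0:ℝ) < 3) (by positivity)]
    nlinarith [mul_le_mul_of_nonneg_left h4 h0]
  calc t/3 ≤ t/(2*Real.pi/3) * (Real.sqrt 3/2) := hfin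
    _ ≤ Real.sin t := by linarith [hcc]

-- ‖exp(θ i) - 1‖ = 2 |sin(θ/2)|
lemma norm_exp_mul_I_sub_one (θ : ℝ) :
    ‖Complex.exp (θ * Complex.I) - 1‖ = 2 * |Real.sin (θ/2)| := by
  have h1 : Complex.exp (θ * Complex.I) - 1
      = Complex.mk (Real.cos θ - 1) (Real.sin θ) := by
    apply Complex.ext
    · simp [Complex.exp_ofReal_mul_I_re]
    · simp [Complex.exp_ofReal_mul_I_im]
  rw [h1, Complex.norm_def, Complex.normSq_mk,
    Real.abs_sin_half]
  have h2 : (Real.cos θ - 1) * (Real.cos θ - 1) + Real.sin θ * Real.sin θ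
      = 2 - 2*Real.cos θ := by
    nlinarith [Real.sin_sq_add_cos_sq θ]
  have h3 : Real.sqrt (4*((1-Real.cos θ)/2)) = 2*Real.sqrt ((1-Real.cos θ)/2) := by
    rw [show (4:ℝ) = 2^2 by norm_num, Real.sqrt_mul (by positivity), Real.sqrt_sq (by norm_num)]
  rw [h2, ← h3]
  congr 1
  ring

-- geometric sum bound
lemma geom_norm_bound (v : ℂ) (hv : ‖v‖ = 1) (hv1 : v ≠ 1) (m k : ℕ) :
    ‖∑ j ∈ Finset.Ico m k, v^j‖ ≤ 2 / ‖v - 1‖ := by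
  have hv0 : 0 < ‖v - 1‖ := by
    rw [norm_pos_iff, sub_ne_zero]; exact hv1
  rcases le_or_gt m k with h | h
  · rw [geom_sum_Ico hv1 h, norm_div]
    have hnum : ‖v^k - v^m‖ ≤ 2 := by
      calc ‖v^k - v^m‖ ≤ ‖v^k‖ + ‖v^m‖ := norm_sub_le _ _
        _ = 2 := by rw [norm_pow, norm_pow, hv]; norm_num
    gcongr
  · rw [Finset.Ico_eq_empty (by omega), Finset.sum_empty, norm_zero]
    positivity

-- Abel summation identity on Ico
lemma abel_identity (b : ℕ → ℝ) (v : ℂ) (m : ℕ) : ∀ K, m ≤ K →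
    ∑ j ∈ Finset.Ico m K, (b j : ℂ) * v^j
      = (b K : ℂ) * (∑ j ∈ Finset.Ico m K, v^j)
        + ∑ j ∈ Finset.Ico m K, ((b j - b (j+1) : ℝ) : ℂ) * (∑ i ∈ Finset.Ico m (j+1), v^i) := by
  intro K
  induction K with
  | zero =>
    intro hm
    interval_cases m
    simp
  | succ K ihK =>
    intro hm
    rcases Nat.lt_or_ge m (K+1) with hlt | hge
    · have hmK : m ≤ K := by omega
      simp only [Finset.sum_Ico_succ_top hmK]
      rw [ihK hmK]
      push_cast
      ring
    · have : m = K + 1 := by omega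
      subst this
      simp

-- Abel bound
lemma abel_bound (b : ℕ → ℝ) (hb : ∀ j, 0 ≤ b j) (hmono : ∀ j, b (j+1) ≤ b j)
    (v : ℂ) (hv : ‖v‖ = 1) (hv1 : v ≠ 1) (m K : ℕ) (hmK : m ≤ K) :
    ‖∑ j ∈ Finset.Ico m K, (b j : ℂ) * v^j‖ ≤ b m * (2 / ‖v - 1‖) := by
  have hM0 : 0 ≤ 2 / ‖v - 1‖ := by
    have hv0 : 0 < ‖v - 1‖ := by rw [norm_pos_iff, sub_ne_zero]; exact hv1
    positivity
  rw [abel_identity b v m K hmK]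
  have hmono' : ∀ i j, i ≤ j → b j ≤ b i := by
    intro i j hij
    induction j with
    | zero => interval_cases i; exact le_refl _
    | succ j ihj =>
      rcases Nat.lt_or_ge i (j+1) with h1 | h2
      · exact (hmono j).trans (ihj (by omega))
      · have : i = j + 1 := by omega
        subst this; exact le_refl _
  calc ‖(b K : ℂ) * (∑ j ∈ Finset.Ico m K, v^j)
        + ∑ j ∈ Finset.Ico m K, ((b j - b (j+1) : ℝ) : ℂ) * (∑ i ∈ Finset.Ico m (j+1), v^i)‖
      ≤ ‖(b K : ℂ) * (∑ j ∈ Finset.Ico m K, v^j)‖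
        + ‖∑ j ∈ Finset.Ico m K, ((b j - b (j+1) : ℝ) : ℂ) * (∑ i ∈ Finset.Ico m (j+1), v^i)‖ :=
        norm_add_le _ _
    _ ≤ b K * (2 / ‖v - 1‖) + ∑ j ∈ Finset.Ico m K, (b j - b (j+1)) * (2 / ‖v - 1‖) := by
        apply add_le_add
        · rw [norm_mul, Complex.norm_real, Real.norm_eq_abs, abs_of_nonneg (hb K)]
          exact mul_le_mul_of_nonneg_left (geom_norm_bound v hv hv1 m K) (hb K)
        · refine (norm_sum_le _ _).trans ?_
          apply Finset.sum_le_sum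
          intro j _
          rw [norm_mul, Complex.norm_real, Real.norm_eq_abs,
            abs_of_nonneg (by linarith [hmono j] : (0:ℝ) ≤ b j - b (j+1))]
          exact mul_le_mul_of_nonneg_left (geom_norm_bound v hv hv1 m (j+1))
            (by linarith [hmono j])
    _ = b K * (2 / ‖v - 1‖) + (b m - b K) * (2 / ‖v - 1‖) := by
        rw [← Finset.sum_mul]
        congr 2
        rw [Finset.sum_Ico_eq_sum_range]
        have ht := Finset.sum_range_sub' (fun i => b (m + i)) (K - m)
        simp only [Nat.add_zero] at ht
        rw [show m + (K - m) = K by omega] at ht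
        rw [← ht]
        apply Finset.sum_congr rfl
        intro i _
        rw [show m + i + 1 = m + (i+1) by omega]
    _ = b m * (2 / ‖v - 1‖) := by ring

-- full exponential-sum bound
lemma S_bound {δ : ℝ} (hδ0 : 0 < δ) (hδ1 : δ < 1) {θ : ℝ} (hθ0 : 0 < θ)
    (hθ1 : θ ≤ 4*Real.pi/3) (v : ℂ) (hv : ‖v‖ = 1) (hlow : θ/3 ≤ ‖v - 1‖) (N : ℕ) :
    ‖∑ j ∈ Finset.range N, (cesaroA (δ-1) j : ℂ) * v^j‖ ≤ (6/δ + 6) * θ^(-δ) := by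
  have hπ2 : Real.pi < 3.15 := Real.pi_lt_d2
  have hθ5 : θ ≤ 5 := by linarith
  have hv1 : v ≠ 1 := by
    intro h
    rw [h, sub_self, norm_zero] at hlow
    linarith
  have hv0 : 0 < ‖v - 1‖ := by linarith
  have hM : 2/‖v - 1‖ ≤ 6/θ := by
    rw [div_le_div_iff₀ hv0 hθ0]
    nlinarith
  have hδ1' : δ - 1 < 0 := by linarith
  have hbpos : ∀ j, 0 ≤ cesaroA (δ-1) j := fun j => (cesaroA_pos (by linarith) j).le
  have hbmono : ∀ j, cesaroA (δ-1) (j+1) ≤ cesaroA (δ-1) j :=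
    fun j => cesaroA_antitone hδ1.le (by linarith) j
  have hθδpos : 0 < θ^(-δ) := Real.rpow_pos_of_pos hθ0 _
  set m : ℕ := ⌈1/θ⌉₊ with hm
  have hm1 : (1:ℝ)/θ ≤ m := Nat.le_ceil _
  have hm2 : (m:ℝ) < 1/θ + 1 := Nat.ceil_lt_add_one (by positivity)
  have hm6 : (m:ℝ) ≤ 6/θ := by
    have : (1:ℝ)/θ + 1 ≤ 6/θ := by
      rw [div_add' _ _ _ hθ0.ne', div_le_div_iff₀ hθ0 hθ0]
      nlinarith
    linarith
  -- head bound : for any M ≤ m, sum over range M bounded by (6/δ) θ^{-δ}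
  have head : ∀ M : ℕ, (M:ℝ) ≤ 6/θ →
      ‖∑ j ∈ Finset.range M, (cesaroA (δ-1) j : ℂ) * v^j‖ ≤ (6/δ) * θ^(-δ) := by
    intro M hM6
    calc ‖∑ j ∈ Finset.range M, (cesaroA (δ-1) j : ℂ) * v^j‖
        ≤ ∑ j ∈ Finset.range M, ‖(cesaroA (δ-1) j : ℂ) * v^j‖ := norm_sum_le _ _
      _ ≤ ∑ j ∈ Finset.range M, ((j:ℝ)+1)^(δ-1) := by
          apply Finset.sum_le_sum
          intro j _
          rw [norm_mul, norm_pow, hv, one_pow, mul_one, Complex.norm_real,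
            Real.norm_eq_abs, abs_of_nonneg (hbpos j)]
          exact cesaroA_le_rpow hδ0 hδ1.le j
      _ ≤ (M:ℝ)^δ/δ := sum_rpow_le hδ0 hδ1.le M
      _ ≤ (6/θ)^δ/δ := by
          have : (M:ℝ)^δ ≤ (6/θ)^δ := Real.rpow_le_rpow (Nat.cast_nonneg M) hM6 hδ0.le
          gcongr
      _ ≤ (6/δ) * θ^(-δ) := by
          have hp : (0:ℝ) < θ^δ := Real.rpow_pos_of_pos hθ0 _
          have h6 : (6:ℝ)^δ ≤ 6 := by
            calc (6:ℝ)^δ ≤ (6:ℝ)^(1:ℝ) :=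
              Real.rpow_le_rpow_of_exponent_le (by norm_num) hδ1.le
            _ = 6 := Real.rpow_one 6
          rw [Real.div_rpow (by norm_num) hθ0.le, Real.rpow_neg hθ0.le, div_div,
            show (6:ℝ)/δ * (θ^δ)⁻¹ = 6/(δ*θ^δ) by field_simp,
            div_le_div_iff₀ (by positivity) (by positivity)]
          nlinarith [mul_le_mul_of_nonneg_right h6 (by positivity : (0:ℝ) ≤ δ*θ^δ)]
  rcases le_or_gt N m with hNm | hmN
  · have := head N (le_trans (by exact_mod_cast Nat.cast_le.mpr hNm) hm6)
    refine this.trans ?_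
    nlinarith
  · rw [← Finset.sum_range_add_sum_Ico _ (le_of_lt hmN)]
    have htail : ‖∑ j ∈ Finset.Ico m N, (cesaroA (δ-1) j : ℂ) * v^j‖ ≤ 6 * θ^(-δ) := by
      calc ‖∑ j ∈ Finset.Ico m N, (cesaroA (δ-1) j : ℂ) * v^j‖
          ≤ cesaroA (δ-1) m * (2/‖v - 1‖) :=
            abel_bound _ hbpos hbmono v hv hv1 m N hmN.le
        _ ≤ ((m:ℝ)+1)^(δ-1) * (6/θ) := by
            apply mul_le_mul (cesaroA_le_rpow hδ0 hδ1.le m) hM (by positivity)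
            positivity
        _ ≤ (1/θ)^(δ-1) * (6/θ) := by
            apply mul_le_mul_of_nonneg_right _ (by positivity)
            apply Real.rpow_le_rpow_of_nonpos (by positivity) (by linarith) (by linarith)
        _ = 6 * θ^(-δ) := by
            have hinv : θ⁻¹ = θ^(-1:ℝ) := by
              rw [Real.rpow_neg hθ0.le, Real.rpow_one]
            rw [one_div, Real.inv_rpow hθ0.le, ← Real.rpow_neg hθ0.le,
              show -(δ-1) = 1-δ by ring, div_eq_mul_inv, hinv,
              show θ^(1-δ) * (6 * θ^(-1:ℝ)) = 6 * (θ^(1-δ) * θ^(-1:ℝ)) by ring,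
              ← Real.rpow_add hθ0, show 1-δ+(-1:ℝ) = -δ by ring]
    calc ‖_ + _‖ ≤ ‖∑ j ∈ Finset.range m, (cesaroA (δ-1) j : ℂ) * v^j‖
          + ‖∑ j ∈ Finset.Ico m N, (cesaroA (δ-1) j : ℂ) * v^j‖ := norm_add_le _ _
      _ ≤ (6/δ) * θ^(-δ) + 6 * θ^(-δ) := add_le_add (head m hm6) htail
      _ = (6/δ + 6) * θ^(-δ) := by ring

lemma triple' (s t : ℝ) : Real.sin (s - t) * Real.sin s * Real.sin t
    = (Real.sin (2*(s-t)) - Real.sin (2*s) + Real.sin (2*t))/4 := by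
  have hs := Real.sin_sq_add_cos_sq s
  have ht := Real.sin_sq_add_cos_sq t
  rw [show 2*(s-t) = 2*s - 2*t by ring, Real.sin_sub (2*s) (2*t), Real.sin_sub s t,
    Real.sin_two_mul, Real.sin_two_mul, Real.cos_two_mul, Real.cos_two_mul]
  linear_combination (-(Real.sin s * Real.cos s)) * ht + (Real.sin t * Real.cos t) * hs

lemma triple_sin (p q : ℝ) : Real.sin p * Real.sin ((q+p)/2) * Real.sin ((q-p)/2)
    = (Real.sin (2*p) - Real.sin (p+q) + Real.sin (q-p))/4 := by
  have h := triple' ((q+p)/2) ((q-p)/2)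
  rw [show (q+p)/2 - (q-p)/2 = p by ring] at h
  rw [show 2*((q+p)/2) = p+q by ring, show 2*((q-p)/2) = q-p by ring] at h
  exact h

lemma R_bound {δ : ℝ} (hδ0 : 0 < δ) (hδ1 : δ < 1) (n : ℕ) {θ : ℝ} (hθ0 : 0 < θ)
    (hθ1 : θ ≤ 4*Real.pi/3) :
    |∑ k ∈ Finset.range (n+1),
        cesaroA (δ-1) (n-k) * (Real.sin (((k:ℝ)+1)*θ) - Real.sin ((k:ℝ)*θ))|
      ≤ (6/δ + 6) * θ^(1-δ) := by
  have hπ := Real.pi_gt_three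
  have hπ2 : Real.pi < 3.15 := Real.pi_lt_d2
  set w : ℂ := Complex.exp (θ * Complex.I) with hw
  set v : ℂ := Complex.exp ((-θ:ℝ) * Complex.I) with hv
  have hwk : ∀ k : ℕ, w^k = Complex.exp ((((k:ℝ)*θ :ℝ) :ℂ) * Complex.I) := by
    intro k
    rw [hw, ← Complex.exp_nat_mul]
    congr 1
    push_cast
    ring
  have hvk : ∀ k : ℕ, v^k = Complex.exp (((-((k:ℝ)*θ) :ℝ) :ℂ) * Complex.I) := by
    intro k
    rw [hv, ← Complex.exp_nat_mul]
    congr 1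
    push_cast
    ring
  have hwim : ∀ k : ℕ, (w^k).im = Real.sin ((k:ℝ)*θ) := by
    intro k
    rw [hwk k, Complex.exp_ofReal_mul_I_im]
  have hwnorm : ∀ k : ℕ, ‖w^k‖ = 1 := by
    intro k
    rw [hwk k]
    exact Complex.norm_exp_ofReal_mul_I _
  have hvnorm : ‖v‖ = 1 := Complex.norm_exp_ofReal_mul_I _
  have hwv : w * v = 1 := by
    rw [hw, hv, ← Complex.exp_add]
    rw [show (θ:ℂ) * Complex.I + ((-θ:ℝ):ℂ) * Complex.I = 0 by push_cast; ring,
      Complex.exp_zero]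
  -- the complex sum
  set Sc : ℂ := ∑ k ∈ Finset.range (n+1),
      ((cesaroA (δ-1) (n-k) : ℝ) : ℂ) * (w^(k+1) - w^k) with hSc
  have claim1 : ∑ k ∈ Finset.range (n+1),
      cesaroA (δ-1) (n-k) * (Real.sin (((k:ℝ)+1)*θ) - Real.sin ((k:ℝ)*θ)) = Sc.im := by
    rw [hSc, Complex.im_sum]
    apply Finset.sum_congr rfl
    intro k _
    have h1 := hwim (k+1)
    push_cast at h1
    rw [Complex.mul_im, Complex.ofReal_re, Complex.ofReal_im, Complex.sub_im, hwim k, h1]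
    ring
  have claim2 : Sc = (w - 1) * ∑ k ∈ Finset.range (n+1),
      ((cesaroA (δ-1) (n-k) : ℝ) : ℂ) * w^k := by
    rw [hSc, Finset.mul_sum]
    apply Finset.sum_congr rfl
    intro k _
    rw [pow_succ]
    ring
  have claim3 : ‖∑ k ∈ Finset.range (n+1), ((cesaroA (δ-1) (n-k) : ℝ) : ℂ) * w^k‖
      = ‖∑ j ∈ Finset.range (n+1), ((cesaroA (δ-1) j : ℝ) : ℂ) * v^j‖ := by
    have hrefl := Finset.sum_range_reflect
      (fun k => ((cesaroA (δ-1) (n-k) : ℝ) : ℂ) * w^k) (n+1)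
    rw [← hrefl]
    have hterm : ∀ j ∈ Finset.range (n+1),
        ((cesaroA (δ-1) (n-(n+1-1-j)) : ℝ) : ℂ) * w^(n+1-1-j)
          = w^n * (((cesaroA (δ-1) j : ℝ) : ℂ) * v^j) := by
      intro j hj
      rw [Finset.mem_range] at hj
      have hjn : j ≤ n := by omega
      have h1 : n + 1 - 1 - j = n - j := by omega
      have h2 : n - (n - j) = j := by omega
      rw [h1, h2]
      have h3 : w^n * v^j = w^(n-j) := by
        have h4 : w^n = w^(n-j) * w^j := by
          rw [← pow_add]
          congr 1
          omega
        rw [h4, mul_assoc, mul_comm (w^j), ← mul_pow]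
        rw [mul_comm v w, hwv, one_pow, mul_one]
      rw [show w^n * (((cesaroA (δ-1) j : ℝ) : ℂ) * v^j)
          = ((cesaroA (δ-1) j : ℝ) : ℂ) * (w^n * v^j) by ring, h3]
    rw [Finset.sum_congr rfl hterm, ← Finset.mul_sum, norm_mul, hwnorm n, one_mul]
  -- norm bounds
  have hhalf0 : 0 ≤ θ/2 := by linarith
  have hhalfpi : θ/2 ≤ 2*Real.pi/3 := by linarith
  have hsinpos : θ/6 ≤ Real.sin (θ/2) := by
    have := sin_lower hhalf0 hhalfpi
    linarith [this]
  have hsinle : Real.sin (θ/2) ≤ θ/2 := Real.sin_le hhalf0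
  have hsinnonneg : 0 ≤ Real.sin (θ/2) := by linarith
  have hwnorm1 : ‖w - 1‖ ≤ θ := by
    rw [hw, norm_exp_mul_I_sub_one, abs_of_nonneg hsinnonneg]
    linarith
  have hvnorm1 : θ/3 ≤ ‖v - 1‖ := by
    rw [hv, norm_exp_mul_I_sub_one]
    rw [show (-θ)/2 = -(θ/2) by ring, Real.sin_neg, abs_neg, abs_of_nonneg hsinnonneg]
    linarith
  have hS := S_bound hδ0 hδ1 hθ0 hθ1 v hvnorm hvnorm1 (n+1)
  calc |∑ k ∈ Finset.range (n+1),
        cesaroA (δ-1) (n-k) * (Real.sin (((k:ℝ)+1)*θ) - Real.sin ((k:ℝ)*θ))|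
      = |Sc.im| := by rw [claim1]
    _ ≤ ‖Sc‖ := Complex.abs_im_le_norm Sc
    _ = ‖w - 1‖ * ‖∑ k ∈ Finset.range (n+1), ((cesaroA (δ-1) (n-k) : ℝ) : ℂ) * w^k‖ := by
        rw [claim2, norm_mul]
    _ = ‖w - 1‖ * ‖∑ j ∈ Finset.range (n+1), ((cesaroA (δ-1) j : ℝ) : ℂ) * v^j‖ := by
        rw [claim3]
    _ ≤ θ * ((6/δ + 6) * θ^(-δ)) := by
        apply mul_le_mul hwnorm1 hS (norm_nonneg _) hθ0.le
    _ = (6/δ + 6) * θ^(1-δ) := by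
        have : θ * θ^(-δ) = θ^(1-δ) := by
          nth_rewrite 1 [← Real.rpow_one θ]
          rw [← Real.rpow_add hθ0, show (1:ℝ) + -δ = 1-δ by ring]
        rw [← this]
        ring

set_option maxHeartbeats 1000000 in
lemma pointwise_bound {δ : ℝ} (hδ0 : 0 < δ) (hδ1 : δ < 1) (n : ℕ) (x y : ℝ)
    (hy0 : 0 < y) (hyx : y ≤ x/3) (hx1 : x ≤ 1) :
    |∑ k ∈ Finset.range (n+1), cesaroA (δ-1) (n-k) * DstarK k (x, y)|
      ≤ (6*Real.pi*(6/δ + 6)) * x^(-(1+δ)) * y⁻¹ := by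
  have hπ := Real.pi_gt_three
  have hπ2 : Real.pi < 3.15 := Real.pi_lt_d2
  have hx0 : 0 < x := by linarith
  have hy3 : y ≤ 1/3 := by linarith
  set Cδ : ℝ := 6/δ + 6 with hCδ
  have hCpos : 0 < Cδ := by rw [hCδ]; positivity
  -- denominator bound
  have s1 : y ≤ Real.sin (Real.pi*y) := by
    have h := sin_lower (t := Real.pi*y) (by positivity) (by nlinarith)
    nlinarith
  have s2 : x/2 ≤ Real.sin (Real.pi*(x+y)/2) := by
    have h := sin_lower (t := Real.pi*(x+y)/2) (by positivity) (by nlinarith)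
    nlinarith
  have s3 : x/3 ≤ Real.sin (Real.pi*(x-y)/2) := by
    have harg0 : 0 ≤ Real.pi*(x-y)/2 := by nlinarith
    have h := sin_lower (t := Real.pi*(x-y)/2) harg0 (by nlinarith)
    nlinarith
  set d : ℝ := Real.sin (Real.pi*y) * Real.sin (Real.pi*(x+y)/2) * Real.sin (Real.pi*(x-y)/2)
    with hd
  have hdlow : y*(x/2)*(x/3) ≤ d := by
    rw [hd]
    have h1 : 0 < Real.sin (Real.pi*y) := lt_of_lt_of_le hy0 s1
    have h2 : 0 < Real.sin (Real.pi*(x+y)/2) := by nlinarith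
    have h3 : 0 < Real.sin (Real.pi*(x-y)/2) := by nlinarith
    have m1 : y * Real.sin (Real.pi*(x+y)/2) ≤ Real.sin (Real.pi*y) * Real.sin (Real.pi*(x+y)/2) :=
      mul_le_mul_of_nonneg_right s1 h2.le
    have m2 : y * (x/2) ≤ y * Real.sin (Real.pi*(x+y)/2) :=
      mul_le_mul_of_nonneg_left s2 hy0.le
    have m3 : y * (x/2) * (x/3)
        ≤ Real.sin (Real.pi*y) * Real.sin (Real.pi*(x+y)/2) * (x/3) := by
      apply mul_le_mul_of_nonneg_right (le_trans m2 m1) (by positivity)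
    refine m3.trans ?_
    apply mul_le_mul_of_nonneg_left s3 (by positivity)
  have hdpos : 0 < d := lt_of_lt_of_le (by positivity) hdlow
  -- kernel identity
  set θ₁ : ℝ := 2*Real.pi*y with hθ₁
  set θ₂ : ℝ := Real.pi*(x+y) with hθ₂
  set θ₃ : ℝ := Real.pi*(x-y) with hθ₃
  have hQ : ∀ m : ℝ, Real.sin (m*Real.pi*y) * Real.sin (m*Real.pi*(x+y)/2)
      * Real.sin (m*Real.pi*(x-y)/2)
      = (Real.sin (m*θ₁) - Real.sin (m*θ₂) + Real.sin (m*θ₃))/4 := by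
    intro m
    have h := triple_sin (m*Real.pi*y) (m*Real.pi*x)
    rw [show (m*Real.pi*x + m*Real.pi*y)/2 = m*Real.pi*(x+y)/2 by ring,
      show (m*Real.pi*x - m*Real.pi*y)/2 = m*Real.pi*(x-y)/2 by ring,
      show 2*(m*Real.pi*y) = m*θ₁ by rw [hθ₁]; ring,
      show m*Real.pi*y + m*Real.pi*x = m*θ₂ by rw [hθ₂]; ring,
      show m*Real.pi*x - m*Real.pi*y = m*θ₃ by rw [hθ₃]; ring] at h
    exact h
  have hterm : ∀ k ∈ Finset.range (n+1), cesaroA (δ-1) (n-k) * DstarK k (x, y)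
      = (cesaroA (δ-1) (n-k) * (Real.sin (((k:ℝ)+1)*θ₁) - Real.sin ((k:ℝ)*θ₁))
        - cesaroA (δ-1) (n-k) * (Real.sin (((k:ℝ)+1)*θ₂) - Real.sin ((k:ℝ)*θ₂))
        + cesaroA (δ-1) (n-k) * (Real.sin (((k:ℝ)+1)*θ₃) - Real.sin ((k:ℝ)*θ₃))) / (4*d) := by
    intro k _
    have halg : ∀ a s1 s2 s3 t1 t2 t3 : ℝ,
        a * (((s1 - s2 + s3)/4 - (t1 - t2 + t3)/4)/d)
          = (a*(s1 - t1) - a*(s2 - t2) + a*(s3 - t3))/(4*d) := by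
      intro a s1 s2 s3 t1 t2 t3
      field_simp
      ring
    unfold DstarK
    simp only
    rw [hQ ((k:ℝ)+1), hQ (k:ℝ), ← hd]
    exact halg _ _ _ _ _ _ _
  rw [Finset.sum_congr rfl hterm, ← Finset.sum_div, Finset.sum_add_distrib,
    Finset.sum_sub_distrib]
  -- three R sums
  have hR1 := R_bound hδ0 hδ1 n (θ := θ₁) (by rw [hθ₁]; positivity) (by rw [hθ₁]; nlinarith)
  have hR2 := R_bound hδ0 hδ1 n (θ := θ₂) (by rw [hθ₂]; nlinarith) (by rw [hθ₂]; nlinarith)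
  have hR3 := R_bound hδ0 hδ1 n (θ := θ₃) (by rw [hθ₃]; nlinarith) (by rw [hθ₃]; nlinarith)
  set B : ℝ := x^(1-δ) with hB
  have hBpos : 0 < B := by rw [hB]; exact Real.rpow_pos_of_pos hx0 _
  have hbase : (1:ℝ) ≤ 4*Real.pi/3 := by nlinarith
  have hpow : ∀ θ : ℝ, 0 < θ → θ ≤ (4*Real.pi/3)*x → θ^(1-δ) ≤ (4*Real.pi/3) * B := by
    intro θ h0 hle
    calc θ^(1-δ) ≤ ((4*Real.pi/3)*x)^(1-δ) :=
        Real.rpow_le_rpow h0.le hle (by linarith)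
      _ = (4*Real.pi/3)^(1-δ) * B := by
          rw [hB, Real.mul_rpow (by positivity) hx0.le]
      _ ≤ (4*Real.pi/3) * B := by
          apply mul_le_mul_of_nonneg_right _ hBpos.le
          calc (4*Real.pi/3)^(1-δ) ≤ (4*Real.pi/3)^(1:ℝ) :=
              Real.rpow_le_rpow_of_exponent_le hbase (by linarith)
            _ = 4*Real.pi/3 := Real.rpow_one _
  have hp1 : θ₁^(1-δ) ≤ (4*Real.pi/3) * B := by
    apply hpow _ (by rw [hθ₁]; positivity)
    rw [hθ₁]; nlinarith
  have hp2 : θ₂^(1-δ) ≤ (4*Real.pi/3) * B := by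
    apply hpow _ (by rw [hθ₂]; nlinarith)
    rw [hθ₂]; nlinarith
  have hp3 : θ₃^(1-δ) ≤ (4*Real.pi/3) * B := by
    apply hpow _ (by rw [hθ₃]; nlinarith)
    rw [hθ₃]; nlinarith
  set R1 : ℝ := ∑ k ∈ Finset.range (n+1),
    cesaroA (δ-1) (n-k) * (Real.sin (((k:ℝ)+1)*θ₁) - Real.sin ((k:ℝ)*θ₁)) with hR1d
  set R2 : ℝ := ∑ k ∈ Finset.range (n+1),
    cesaroA (δ-1) (n-k) * (Real.sin (((k:ℝ)+1)*θ₂) - Real.sin ((k:ℝ)*θ₂)) with hR2d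
  set R3 : ℝ := ∑ k ∈ Finset.range (n+1),
    cesaroA (δ-1) (n-k) * (Real.sin (((k:ℝ)+1)*θ₃) - Real.sin ((k:ℝ)*θ₃)) with hR3d
  have habs : |(R1 - R2 + R3)/(4*d)| ≤ (|R1| + |R2| + |R3|)/(4*d) := by
    rw [abs_div, abs_of_pos (by positivity : (0:ℝ) < 4*d)]
    gcongr
    calc |R1 - R2 + R3| ≤ |R1 - R2| + |R3| := abs_add_le _ _
      _ ≤ |R1| + |R2| + |R3| := by linarith [abs_sub R1 R2]
  refine habs.trans ?_
  have hnum : |R1| + |R2| + |R3| ≤ 3 * (Cδ * ((4*Real.pi/3) * B)) := by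
    have b1 : |R1| ≤ Cδ * ((4*Real.pi/3) * B) :=
      hR1.trans (mul_le_mul_of_nonneg_left hp1 hCpos.le)
    have b2 : |R2| ≤ Cδ * ((4*Real.pi/3) * B) :=
      hR2.trans (mul_le_mul_of_nonneg_left hp2 hCpos.le)
    have b3 : |R3| ≤ Cδ * ((4*Real.pi/3) * B) :=
      hR3.trans (mul_le_mul_of_nonneg_left hp3 hCpos.le)
    linarith
  calc (|R1| + |R2| + |R3|)/(4*d) ≤ (3 * (Cδ * ((4*Real.pi/3) * B)))/(4*d) := by gcongr
    _ = (Cδ*Real.pi*B)/d := by ring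
    _ ≤ (Cδ*Real.pi*B)/(y*(x/2)*(x/3)) :=
        div_le_div_of_nonneg_left (by positivity) (by positivity) hdlow
    _ = (6*Real.pi*Cδ) * (B * (x⁻¹ * x⁻¹)) * y⁻¹ := by
        field_simp
        ring
    _ = (6*Real.pi*Cδ) * x^(-(1+δ)) * y⁻¹ := by
        have hxinv : x⁻¹ = x^(-1:ℝ) := by rw [Real.rpow_neg hx0.le, Real.rpow_one]
        rw [hB, hxinv, ← Real.rpow_add hx0, ← Real.rpow_add hx0,
          show 1-δ + (-1 + -1:ℝ) = -(1+δ) by ring]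


lemma gammaT_closed : IsClosed GammaT := by
  have h : GammaT
      = {u : ℝ×ℝ | 0 ≤ u.2} ∩ ({u | u.2 ≤ u.1/3} ∩ ({u | 0 ≤ u.1} ∩ {u | u.1 ≤ 1})) := rfl
  rw [h]
  exact (isClosed_le continuous_const continuous_snd).inter
    ((isClosed_le continuous_snd (continuous_fst.div_const 3)).inter
      ((isClosed_le continuous_const continuous_fst).inter
        (isClosed_le continuous_fst continuous_const)))


set_option maxHeartbeats 2000000 in
theorem stmt_14 :
    ∀ δ : ℝ, 0 < δ → δ < 1 → ∃ C : ℝ, 0 < C ∧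
      ∀ n : ℕ, 1 ≤ n →
        (1 / cesaroA δ n) *
            ∫ u in GammaT ∩
                {u : ℝ × ℝ | 1 / ((n : ℝ) + 1) ≤ u.1 ∧ 1 / (3 * ((n : ℝ) + 1)) ≤ u.2},
              |∑ k ∈ Finset.range (n + 1), cesaroA (δ - 1) (n - k) * DstarK k u| ≤
          C * Real.log (n + 1) := by
  intro δ hδ0 hδ1
  set K : ℝ := 6*Real.pi*(6/δ + 6) with hK
  have hπ := Real.pi_gt_three
  have hπ2 : Real.pi < 3.15 := Real.pi_lt_d2
  have hKpos : 0 < K := by rw [hK]; positivity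
  refine ⟨K/δ + 1, by positivity, ?_⟩
  intro n hn
  have hnp : (0:ℝ) < (n:ℝ) + 1 := by positivity
  have hn1 : (1:ℝ) ≤ (n:ℝ) := by exact_mod_cast hn
  set a : ℝ := 1/((n:ℝ)+1) with ha
  set b : ℝ := 1/(3*((n:ℝ)+1)) with hb
  have ha0 : 0 < a := by rw [ha]; positivity
  have hb0 : 0 < b := by rw [hb]; positivity
  have ha1 : a ≤ 1 := by rw [ha, div_le_one hnp]; linarith
  have hb13 : b ≤ 1/3 := by
    rw [hb, div_le_div_iff₀ (by positivity) (by norm_num)]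
    linarith
  set S : Set (ℝ × ℝ) := GammaT ∩ {u : ℝ × ℝ | a ≤ u.1 ∧ b ≤ u.2} with hS
  set R : Set (ℝ × ℝ) := Set.Icc a 1 ×ˢ Set.Icc b (1/3) with hR
  set F : (ℝ × ℝ) → ℝ :=
    fun u => |∑ k ∈ Finset.range (n + 1), cesaroA (δ - 1) (n - k) * DstarK k u| with hF
  set g : (ℝ × ℝ) → ℝ := fun u => (K * u.1^(-(1+δ))) * u.2⁻¹ with hg
  have hsub : S ⊆ R := by
    rintro u ⟨⟨h1, h2, h3, h4⟩, h5, h6⟩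
    exact ⟨⟨h5, h4⟩, h6, by linarith⟩
  have hRmeas : MeasurableSet R := measurableSet_Icc.prod measurableSet_Icc
  have hRcomp : IsCompact R := isCompact_Icc.prod isCompact_Icc
  have hSclosed : IsClosed S := by
    rw [hS]
    have h2 : IsClosed {u : ℝ×ℝ | a ≤ u.1 ∧ b ≤ u.2} := by
      have : {u : ℝ×ℝ | a ≤ u.1 ∧ b ≤ u.2} = {u : ℝ×ℝ | a ≤ u.1} ∩ {u : ℝ×ℝ | b ≤ u.2} := rfl
      rw [this]
      exact (isClosed_le continuous_const continuous_fst).inter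
        (isClosed_le continuous_const continuous_snd)
    exact gammaT_closed.inter h2
  have hSmeas : MeasurableSet S := hSclosed.measurableSet
  have hScomp : IsCompact S := hRcomp.of_isClosed_subset hSclosed hsub
  -- membership facts
  have hmemS : ∀ u ∈ S, 0 < u.2 ∧ u.2 ≤ u.1/3 ∧ u.1 ≤ 1 ∧ 0 < u.1 := by
    rintro u ⟨⟨h1, h2, h3, h4⟩, h5, h6⟩
    have hy0 : 0 < u.2 := lt_of_lt_of_le hb0 h6
    exact ⟨hy0, h2, h4, by linarith⟩
  -- continuity of F on S
  have hden : ∀ u ∈ S, Real.sin (Real.pi * u.2) * Real.sin (Real.pi * (u.1 + u.2) / 2) *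
      Real.sin (Real.pi * (u.1 - u.2) / 2) ≠ 0 := by
    intro u hu
    obtain ⟨hy0, h2, h4, hx0⟩ := hmemS u hu
    have hy13 : u.2 ≤ 1/3 := by linarith
    have p1 : 0 < Real.sin (Real.pi * u.2) :=
      Real.sin_pos_of_pos_of_lt_pi (by positivity) (by nlinarith)
    have p2 : 0 < Real.sin (Real.pi * (u.1 + u.2) / 2) :=
      Real.sin_pos_of_pos_of_lt_pi (by positivity) (by nlinarith)
    have p3 : 0 < Real.sin (Real.pi * (u.1 - u.2) / 2) := by
      apply Real.sin_pos_of_pos_of_lt_pi (by nlinarith) (by nlinarith)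
    exact (mul_pos (mul_pos p1 p2) p3).ne'
  have hFcont : ContinuousOn F S := by
    rw [hF]
    apply ContinuousOn.abs
    apply continuousOn_finset_sum
    intro k _
    apply ContinuousOn.mul continuousOn_const
    have hc : ContinuousOn (fun u : ℝ × ℝ =>
        (Real.sin (((k : ℝ) + 1) * Real.pi * u.2) *
          Real.sin (((k : ℝ) + 1) * Real.pi * (u.1 + u.2) / 2) *
          Real.sin (((k : ℝ) + 1) * Real.pi * (u.1 - u.2) / 2) -
        Real.sin ((k : ℝ) * Real.pi * u.2) *
          Real.sin ((k : ℝ) * Real.pi * (u.1 + u.2) / 2) *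
          Real.sin ((k : ℝ) * Real.pi * (u.1 - u.2) / 2)) /
        (Real.sin (Real.pi * u.2) * Real.sin (Real.pi * (u.1 + u.2) / 2) *
          Real.sin (Real.pi * (u.1 - u.2) / 2))) S := by
      apply ContinuousOn.div
      · apply Continuous.continuousOn
        fun_prop
      · apply Continuous.continuousOn
        fun_prop
      · exact hden
    exact hc
  have hFint : IntegrableOn F S := hFcont.integrableOn_compact hScomp
  have hgcontR : ContinuousOn g R := by
    rw [hg]
    apply ContinuousOn.mul
    · apply ContinuousOn.mul continuousOn_const
      apply ContinuousOn.rpow_const continuous_fst.continuousOn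
      intro u hu
      exact Or.inl (lt_of_lt_of_le ha0 hu.1.1).ne'
    · apply ContinuousOn.inv₀ continuous_snd.continuousOn
      intro u hu
      exact (lt_of_lt_of_le hb0 hu.2.1).ne'
  have hgintR : IntegrableOn g R := hgcontR.integrableOn_compact hRcomp
  have hgintS : IntegrableOn g S := hgintR.mono_set hsub
  -- step 1
  have step1 : ∫ u in S, F u ≤ ∫ u in S, g u := by
    apply setIntegral_mono_on hFint hgintS hSmeas
    intro u hu
    obtain ⟨hy0, h2, h4, hx0⟩ := hmemS u hu
    have hpb := pointwise_bound hδ0 hδ1 n u.1 u.2 hy0 h2 h4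
    rw [show ((u.1, u.2) : ℝ × ℝ) = u from rfl] at hpb
    rw [hF, hg, hK]
    calc |∑ k ∈ Finset.range (n + 1), cesaroA (δ - 1) (n - k) * DstarK k u|
        ≤ 6*Real.pi*(6/δ + 6) * u.1^(-(1+δ)) * u.2⁻¹ := hpb
      _ = 6*Real.pi*(6/δ + 6) * u.1^(-(1+δ)) * u.2⁻¹ := rfl
  -- step 2
  have step2 : ∫ u in S, g u ≤ ∫ u in R, g u := by
    apply setIntegral_mono_set hgintR
    · refine (MeasureTheory.ae_restrict_iff' hRmeas).2 (Filter.Eventually.of_forall ?_)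
      intro u hu
      have h1 : (0:ℝ) ≤ u.1 := le_trans ha0.le hu.1.1
      have h2 : (0:ℝ) ≤ u.2⁻¹ := inv_nonneg.2 (le_trans hb0.le hu.2.1)
      have h3 : (0:ℝ) ≤ u.1 ^ (-(1+δ)) := Real.rpow_nonneg h1 _
      rw [hg]
      have : (0:ℝ) ≤ (K * u.1^(-(1+δ))) * u.2⁻¹ := by positivity
      exact this
    · exact HasSubset.Subset.eventuallyLE hsub
  -- step 3 : product integral
  have step3 : ∫ u in R, g u
      = (∫ x in Set.Icc a 1, K * x^(-(1+δ))) * (∫ y in Set.Icc b (1/3), y⁻¹) := by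
    rw [hg, hR, MeasureTheory.Measure.volume_eq_prod]
    exact MeasureTheory.setIntegral_prod_mul (fun x => K * x^(-(1+δ))) (fun y => y⁻¹) _ _
  have I1 : ∫ x in Set.Icc a 1, K * x^(-(1+δ)) = K * ((a^(-δ) - 1)/δ) := by
    rw [MeasureTheory.integral_Icc_eq_integral_Ioc, ← intervalIntegral.integral_of_le ha1,
      intervalIntegral.integral_const_mul]
    congr 1
    rw [integral_rpow (Or.inr ⟨by intro hc; rw [show -(1+δ) = -1 ↔ δ = 0 by constructor <;>
        (intro h; linarith)] at hc; exact hδ0.ne' hc,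
      Set.notMem_uIcc_of_lt ha0 one_pos⟩)]
    rw [show -(1+δ)+1 = -δ by ring, Real.one_rpow, div_neg]
    ring
  have I2 : ∫ y in Set.Icc b (1/3), y⁻¹ = Real.log ((n:ℝ)+1) := by
    rw [MeasureTheory.integral_Icc_eq_integral_Ioc, ← intervalIntegral.integral_of_le hb13,
      integral_inv (Set.notMem_uIcc_of_lt hb0 (by norm_num))]
    congr 1
    rw [hb]
    field_simp
  have ha_delta : a^(-δ) = ((n:ℝ)+1)^δ := by
    rw [ha, one_div, Real.inv_rpow hnp.le, Real.rpow_neg hnp.le, inv_inv]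
  have hpowpos : 0 < ((n:ℝ)+1)^δ := Real.rpow_pos_of_pos hnp _
  have hI1bound : (a^(-δ) - 1)/δ ≤ ((n:ℝ)+1)^δ/δ := by
    rw [ha_delta]
    gcongr
    linarith
  have hlog0 : 0 ≤ Real.log ((n:ℝ)+1) := Real.log_nonneg (by linarith)
  have hA : 0 < cesaroA δ n := cesaroA_pos (by linarith) n
  have hAlow : ((n:ℝ)+1)^δ ≤ cesaroA δ n := rpow_le_cesaroA hδ0.le hδ1.le n
  have hIbound : ∫ u in S, F u ≤ K * (((n:ℝ)+1)^δ/δ) * Real.log ((n:ℝ)+1) := by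
    calc ∫ u in S, F u ≤ ∫ u in S, g u := step1
      _ ≤ ∫ u in R, g u := step2
      _ = (K * ((a^(-δ) - 1)/δ)) * Real.log ((n:ℝ)+1) := by rw [step3, I1, I2]
      _ ≤ K * (((n:ℝ)+1)^δ/δ) * Real.log ((n:ℝ)+1) := by
          apply mul_le_mul_of_nonneg_right _ hlog0
          exact mul_le_mul_of_nonneg_left hI1bound hKpos.le
  have hfrac : 1/cesaroA δ n ≤ 1/((n:ℝ)+1)^δ := by
    apply one_div_le_one_div_of_le hpowpos hAlow
  have hFnonneg : 0 ≤ ∫ u in S, F u := by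
    apply MeasureTheory.setIntegral_nonneg hSmeas
    intro u _
    rw [hF]
    exact abs_nonneg _
  have hBnonneg : 0 ≤ K * (((n:ℝ)+1)^δ/δ) * Real.log ((n:ℝ)+1) :=
    mul_nonneg (mul_nonneg hKpos.le (by positivity)) hlog0
  calc (1/cesaroA δ n) * ∫ u in S, F u
      ≤ (1/cesaroA δ n) * (K * (((n:ℝ)+1)^δ/δ) * Real.log ((n:ℝ)+1)) := by
        apply mul_le_mul_of_nonneg_left hIbound (by positivity)
    _ ≤ (1/((n:ℝ)+1)^δ) * (K * (((n:ℝ)+1)^δ/δ) * Real.log ((n:ℝ)+1)) := by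
        apply mul_le_mul_of_nonneg_right hfrac hBnonneg
    _ = (K/δ) * Real.log ((n:ℝ)+1) := by
        field_simp
    _ ≤ (K/δ + 1) * Real.log ((n:ℝ)+1) := by
        have hKd : 0 ≤ K/δ := by positivity
        nlinarith
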